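/- Let X be a nonempty compact subset of ℂ, Φ a representation of R(X) on a complex Hilbert space H, and (μ_{f,g})_{f,g ∈ H} a system of elementary spectral measures of Φ. Let (Q_α)_{α ∈ ι} be a family of pairwise commuting continuous linear projections on M(X), each having property R, with Q_α Q_β = 0 for α ≠ β, and let Q₀ be a continuous linear projection on M(X) with property R, commuting with every Q_α, with Q₀ Q_α = 0 for all α, and such that for every L ∈ M(X) the family (Q_α L)_α is summable in M(X) with Σ_α Q_α L + Q₀ L = L. For each α let P_α ∈ B(H) be the operator with ⟨P_α f, g⟩ = (Q_α μ_{f,g})(1) and let P₀ ∈ B(H) satisfy ⟨P₀ f, g⟩ = (Q₀ μ_{f,g})(1). Then there exists an invertible operator S ∈ B(H) (with bounded inverse) such that: each S⁻¹ P_α S and S⁻¹ P₀ S is a self-adjoint projection; these projections are pairwise orthogonal (products zero); for every f ∈ H the family (S⁻¹ P_α S f)_α is summable with Σ_α S⁻¹ P_α S f + S⁻¹ P₀ S f = f; and for every u ∈ R(X), the operator S⁻¹ Φ(u) S commutes with every S⁻¹ P_α S and with S⁻¹ P₀ S. -/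

import Mathlib

open scoped InnerProductSpace ComplexConjugate

/-- The set of restrictions to `X` of rational functions with poles off `X`. -/
def rationalFunctionsOn (X : Set ℂ) : Set C(X, ℂ) :=
  {u | ∃ p q : Polynomial ℂ, (∀ z ∈ X, q.eval z ≠ 0) ∧
    ∀ z : X, u z = p.eval (z : ℂ) / q.eval (z : ℂ)}

/-- `R(X)`: the closure in `C(X, ℂ)` (sup norm) of the algebra of rational functions with
poles off `X`. -/
noncomputable def RX (X : Set ℂ) [CompactSpace X] : Subalgebra ℂ C(X, ℂ) :=
  (Algebra.adjoin ℂ (rationalFunctionsOn X)).topologicalClosure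

/-- `M(X)`: the continuous dual of `C(X, ℂ)`; by the Riesz representation theorem its members
are (identified with) the regular complex Borel measures on `X`. -/
abbrev MX (X : Set ℂ) [CompactSpace X] := C(X, ℂ) →L[ℂ] ℂ

/-- The module action of `C(X, ℂ)` on `M(X)`: `(u·L)(v) = L(uv)`. -/
noncomputable def cdot (X : Set ℂ) [CompactSpace X] (u : C(X, ℂ)) (L : MX X) : MX X :=
  L.comp (ContinuousLinearMap.mul ℂ C(X, ℂ) u)

/-- Property R (after F. and M. Riesz) for an operator `Q` on `M(X)`: `Q` maps the annihilator
of `R(X)` into itself and commutes with the action of `C(X, ℂ)`. -/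
def HasPropertyR (X : Set ℂ) [CompactSpace X] (Q : MX X →L[ℂ] MX X) : Prop :=
  (∀ L : MX X, (∀ u : RX X, L (u : C(X, ℂ)) = 0) → ∀ u : RX X, Q L (u : C(X, ℂ)) = 0) ∧
  (∀ (u : C(X, ℂ)) (L : MX X), Q (cdot X u L) = cdot X u (Q L))

/-- A system of elementary spectral measures of a representation `Φ` of `R(X)` on a complex
Hilbert space `H`: a family `(μ_{f,g})` in `M(X)`, linear in `f`, conjugate-linear in `g`,
with `μ_{f,g}(u) = ⟨Φ(u)f, g⟩` on `R(X)` and `‖μ_{f,g}‖ ≤ C‖f‖‖g‖` where `C` also bounds `Φ`. -/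
structure ElemSpectralMeasures (X : Set ℂ) [CompactSpace X] {H : Type*}
    [NormedAddCommGroup H] [InnerProductSpace ℂ H]
    (Φ : RX X →ₐ[ℂ] (H →L[ℂ] H)) where
  μ : H → H → MX X
  add_left : ∀ f f' g, μ (f + f') g = μ f g + μ f' g
  smul_left : ∀ (c : ℂ) f g, μ (c • f) g = c • μ f g
  add_right : ∀ f g g', μ f (g + g') = μ f g + μ f g'
  smul_right : ∀ (c : ℂ) f g, μ f (c • g) = (conj c) • μ f g
  repr : ∀ (u : RX X) (f g : H), μ f g (u : C(X, ℂ)) = ⟪g, Φ u f⟫_ℂ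
  bound : ∃ C : ℝ, (∀ u : RX X, ‖Φ u‖ ≤ C * ‖u‖) ∧ ∀ f g, ‖μ f g‖ ≤ C * ‖f‖ * ‖g‖


set_option linter.unusedSectionVars false
set_option linter.unusedVariables false
set_option linter.unreachableTactic false
set_option linter.unusedTactic false
set_option maxHeartbeats 4000000
set_option synthInstance.maxHeartbeats 1000000

namespace SimAux
section P1


variable {X : Set ℂ} [CompactSpace X]
variable {H : Type*} [NormedAddCommGroup H] [InnerProductSpace ℂ H] [CompleteSpace H]
variable {Φ : RX X →ₐ[ℂ] (H →L[ℂ] H)} (E : ElemSpectralMeasures X Φ)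

lemma cdot_apply (u : C(X, ℂ)) (L : MX X) (v : C(X, ℂ)) : cdot X u L v = L (u * v) := rfl

lemma agree_on_RX {Q : MX X →L[ℂ] MX X} (hQ : HasPropertyR X Q)
    {L₁ L₂ : MX X} (h : ∀ u : RX X, L₁ (u : C(X,ℂ)) = L₂ (u : C(X,ℂ))) (u : RX X) :
    Q L₁ (u : C(X,ℂ)) = Q L₂ (u : C(X,ℂ)) := by
  have h0 : ∀ v : RX X, (L₁ - L₂) (v : C(X,ℂ)) = 0 := by
    intro v; simp [ContinuousLinearMap.sub_apply, h v]
  have := hQ.1 (L₁ - L₂) h0 u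
  simp only [map_sub, ContinuousLinearMap.sub_apply, sub_eq_zero] at this
  exact this

lemma mu_phi_left (u v : RX X) (f g : H) :
    E.μ (Φ u f) g (v : C(X,ℂ)) = cdot X (u : C(X,ℂ)) (E.μ f g) (v : C(X,ℂ)) := by
  rw [cdot_apply, E.repr v (Φ u f) g]
  have h2 : Φ v (Φ u f) = Φ (v * u) f := by rw [map_mul]; rfl
  rw [h2, ← E.repr (v * u) f g]
  congr 1
  all_goals (push_cast; ring)

lemma mu_phi_adj (u v : RX X) (f g : H) :
    E.μ f (ContinuousLinearMap.adjoint (Φ u) g) (v : C(X,ℂ))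
      = cdot X (u : C(X,ℂ)) (E.μ f g) (v : C(X,ℂ)) := by
  rw [cdot_apply, E.repr v f _, ContinuousLinearMap.adjoint_inner_left]
  have h2 : Φ u (Φ v f) = Φ (u * v) f := by rw [map_mul]; rfl
  rw [h2, ← E.repr (u * v) f g]
  congr 1
  all_goals (push_cast; ring)

lemma key_eval {Q : MX X →L[ℂ] MX X} (hQ : HasPropertyR X Q) (u : RX X) (f g : H) (w : RX X) :
    Q (E.μ (Φ u f) g) (w : C(X,ℂ)) = Q (E.μ f g) ((u * w : RX X) : C(X,ℂ)) := by
  rw [agree_on_RX hQ (fun v => mu_phi_left E u v f g) w, hQ.2, cdot_apply]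
  congr 1
  all_goals (push_cast; ring)

lemma key_eval_adj {Q : MX X →L[ℂ] MX X} (hQ : HasPropertyR X Q) (u : RX X) (f g : H) (w : RX X) :
    Q (E.μ f (ContinuousLinearMap.adjoint (Φ u) g)) (w : C(X,ℂ))
      = Q (E.μ f g) ((u * w : RX X) : C(X,ℂ)) := by
  rw [agree_on_RX hQ (fun v => mu_phi_adj E u v f g) w, hQ.2, cdot_apply]
  congr 1
  all_goals (push_cast; ring)

lemma one_coe : ((1 : RX X) : C(X,ℂ)) = 1 := rfl

lemma commute_phi {Q : MX X →L[ℂ] MX X} (hQ : HasPropertyR X Q) {B : H →L[ℂ] H}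
    (hB : ∀ f g, ⟪g, B f⟫_ℂ = Q (E.μ f g) 1) (u : RX X) :
    B ∘L Φ u = Φ u ∘L B := by
  ext f
  apply ext_inner_left ℂ
  intro g
  have h1 : ⟪g, B (Φ u f)⟫_ℂ = Q (E.μ f g) ((u * 1 : RX X) : C(X,ℂ)) := by
    rw [hB, ← one_coe (X := X), key_eval E hQ]
  have h2 : ⟪g, Φ u (B f)⟫_ℂ = Q (E.μ f g) ((u * 1 : RX X) : C(X,ℂ)) := by
    rw [← ContinuousLinearMap.adjoint_inner_left, hB, ← one_coe (X := X),
      key_eval_adj E hQ]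
  simp only [ContinuousLinearMap.comp_apply]
  rw [h1, h2]

lemma mu_B {Q : MX X →L[ℂ] MX X} (hQ : HasPropertyR X Q) {B : H →L[ℂ] H}
    (hB : ∀ f g, ⟪g, B f⟫_ℂ = Q (E.μ f g) 1) (f g : H) (v : RX X) :
    E.μ (B f) g (v : C(X,ℂ)) = Q (E.μ f g) (v : C(X,ℂ)) := by
  have h1 : Φ v (B f) = B (Φ v f) := by
    have := commute_phi E hQ hB v
    have := congrArg (fun (T : H →L[ℂ] H) => T f) this
    simpa using this.symm
  rw [E.repr v (B f) g, h1, hB, ← one_coe (X := X), key_eval E hQ, mul_one]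

lemma comp_eval {Q Q' : MX X →L[ℂ] MX X} (hQ : HasPropertyR X Q) (hQ' : HasPropertyR X Q')
    {B B' : H →L[ℂ] H}
    (hB : ∀ f g, ⟪g, B f⟫_ℂ = Q (E.μ f g) 1) (hB' : ∀ f g, ⟪g, B' f⟫_ℂ = Q' (E.μ f g) 1)
    (f g : H) : ⟪g, B (B' f)⟫_ℂ = Q (Q' (E.μ f g)) 1 := by
  rw [hB, ← one_coe (X := X), agree_on_RX hQ (fun v => mu_B E hQ' hB' f g v) 1]

lemma mu_one (f g : H) : E.μ f g 1 = ⟪g, f⟫_ℂ := by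
  rw [← one_coe (X := X), E.repr 1 f g, map_one]
  rfl


end P1
section P2


variable {H : Type*} [NormedAddCommGroup H] [InnerProductSpace ℂ H]
variable {ι : Type*}

/-- sign of a subset at a point -/
noncomputable def sg [DecidableEq ι] (G : Finset ι) (α : ι) : ℂ := if α ∈ G then 1 else -1

lemma conj_sg [DecidableEq ι] (G : Finset ι) (α : ι) : (starRingEnd ℂ) (sg G α) = sg G α := by
  unfold sg; split <;> simp

lemma sg_sq [DecidableEq ι] (G : Finset ι) (α : ι) : sg G α * sg G α = 1 := by
  unfold sg; split <;> ring

lemma sg_pm [DecidableEq ι] (G : Finset ι) (α : ι) : sg G α = 1 ∨ sg G α = -1 := by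
  unfold sg; split <;> simp

lemma sum_sg_mul [DecidableEq ι] {F : Finset ι} {α β : ι} (hα : α ∈ F) (hβ : β ∈ F)
    (hne : α ≠ β) : ∑ G ∈ F.powerset, sg G α * sg G β = 0 := by
  apply Finset.sum_involution (fun G _ => if α ∈ G then G.erase α else insert α G)
  · intro G hG
    by_cases h : α ∈ G
    · simp only [h, if_true]
      have h1 : sg (G.erase α) α = -1 := by
        unfold sg; simp [Finset.mem_erase]
      have h2 : sg (G.erase α) β = sg G β := by
        unfold sg; simp [Finset.mem_erase, Ne.symm hne]
      rw [h1, h2]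
      have : sg G α = 1 := by unfold sg; simp [h]
      rw [this]; ring
    · simp only [h, if_false]
      have h1 : sg (insert α G) α = 1 := by unfold sg; simp
      have h2 : sg (insert α G) β = sg G β := by
        unfold sg; simp [Finset.mem_insert, Ne.symm hne]
      rw [h1, h2]
      have : sg G α = -1 := by unfold sg; simp [h]
      rw [this]; ring
  · intro G hG _
    by_cases h : α ∈ G
    · simp only [h, if_true]
      intro hc
      rw [← hc] at h
      exact (Finset.notMem_erase α G) h
    · simp only [h, if_false]
      intro hc
      exact h (hc ▸ Finset.mem_insert_self α G)
  · intro G hG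
    by_cases h : α ∈ G
    · simp only [h, if_true, Finset.notMem_erase α G, if_false]
      exact Finset.insert_erase h
    · simp only [h, if_false, Finset.mem_insert_self α G, if_true]
      exact Finset.erase_insert h
  · intro G hG
    rw [Finset.mem_powerset] at hG ⊢
    by_cases h : α ∈ G
    · simp only [h, if_true]
      exact (Finset.erase_subset α G).trans hG
    · simp only [h, if_false]
      exact Finset.insert_subset hα hG

lemma sum_sg_sq [DecidableEq ι] (F : Finset ι) (α : ι) :
    ∑ G ∈ F.powerset, sg G α * sg G α = (2 : ℂ) ^ F.card := by
  have : ∀ G ∈ F.powerset, sg G α * sg G α = 1 := fun G _ => sg_sq G α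
  rw [Finset.sum_congr rfl this, Finset.sum_const, Finset.card_powerset]
  simp

lemma rademacher_identity [DecidableEq ι] (x : ι → H) (F : Finset ι) :
    ∑ G ∈ F.powerset, (‖∑ α ∈ F, sg G α • x α‖ ^ 2 : ℝ)
      = 2 ^ F.card * ∑ α ∈ F, ‖x α‖ ^ 2 := by
  have key : ∑ G ∈ F.powerset, (⟪∑ α ∈ F, sg G α • x α, ∑ α ∈ F, sg G α • x α⟫_ℂ)
      = (2 : ℂ) ^ F.card * ∑ α ∈ F, ⟪x α, x α⟫_ℂ := by
    have expand : ∀ G : Finset ι, ⟪∑ α ∈ F, sg G α • x α, ∑ α ∈ F, sg G α • x α⟫_ℂ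
        = ∑ α ∈ F, ∑ β ∈ F, (sg G α * sg G β) * ⟪x α, x β⟫_ℂ := by
      intro G
      rw [sum_inner]
      refine Finset.sum_congr rfl fun α hα => ?_
      rw [inner_smul_left, conj_sg, inner_sum, Finset.mul_sum]
      refine Finset.sum_congr rfl fun β hβ => ?_
      rw [inner_smul_right]
      ring
    calc ∑ G ∈ F.powerset, ⟪∑ α ∈ F, sg G α • x α, ∑ α ∈ F, sg G α • x α⟫_ℂ
        = ∑ G ∈ F.powerset, ∑ α ∈ F, ∑ β ∈ F, (sg G α * sg G β) * ⟪x α, x β⟫_ℂ := by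
          exact Finset.sum_congr rfl fun G _ => expand G
      _ = ∑ α ∈ F, ∑ β ∈ F, ∑ G ∈ F.powerset, (sg G α * sg G β) * ⟪x α, x β⟫_ℂ := by
          rw [Finset.sum_comm]
          exact Finset.sum_congr rfl fun α _ => Finset.sum_comm
      _ = ∑ α ∈ F, ∑ β ∈ F, (∑ G ∈ F.powerset, sg G α * sg G β) * ⟪x α, x β⟫_ℂ := by
          refine Finset.sum_congr rfl fun α _ => Finset.sum_congr rfl fun β _ => ?_
          rw [Finset.sum_mul]
      _ = ∑ α ∈ F, (2 : ℂ) ^ F.card * ⟪x α, x α⟫_ℂ := by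
          refine Finset.sum_congr rfl fun α hα => ?_
          rw [Finset.sum_eq_single α]
          · rw [sum_sg_sq F α]
          · intro β hβ hne
            rw [sum_sg_mul hα hβ (Ne.symm hne)]
            ring
          · intro h; exact absurd hα h
      _ = (2 : ℂ) ^ F.card * ∑ α ∈ F, ⟪x α, x α⟫_ℂ := by rw [Finset.mul_sum]
  have cast1 : ∀ y : H, ⟪y, y⟫_ℂ = ((‖y‖ ^ 2 : ℝ) : ℂ) := fun y => by
    rw [inner_self_eq_norm_sq_to_K]; norm_cast
  simp only [cast1] at key
  have : ((∑ G ∈ F.powerset, (‖∑ α ∈ F, sg G α • x α‖ ^ 2 : ℝ) : ℝ) : ℂ)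
      = ((2 ^ F.card * ∑ α ∈ F, (‖x α‖ ^ 2 : ℝ) : ℝ) : ℂ) := by
    push_cast
    convert key using 2 <;> norm_cast
  exact_mod_cast this

/-- The Rademacher square-function bound. -/
lemma sq_sum_le [CompleteSpace H] (R : ι → H →L[ℂ] H) (M : ℝ)
    (hM : ∀ (F : Finset ι) (ε : ι → ℂ), (∀ α, ε α = 1 ∨ ε α = -1) →
      ‖∑ α ∈ F, ε α • R α‖ ≤ M)
    (F : Finset ι) (f : H) : ∑ α ∈ F, ‖R α f‖ ^ 2 ≤ M ^ 2 * ‖f‖ ^ 2 := by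
  classical
  have hbound : ∀ G ∈ F.powerset, (‖∑ α ∈ F, sg G α • (R α f)‖ ^ 2 : ℝ)
      ≤ M ^ 2 * ‖f‖ ^ 2 := by
    intro G _
    have h1 : ∑ α ∈ F, sg G α • (R α f) = (∑ α ∈ F, sg G α • R α) f := by
      simp [ContinuousLinearMap.sum_apply, ContinuousLinearMap.smul_apply]
    rw [h1]
    have h2 : ‖(∑ α ∈ F, sg G α • R α) f‖ ≤ M * ‖f‖ := by
      calc ‖(∑ α ∈ F, sg G α • R α) f‖ ≤ ‖∑ α ∈ F, sg G α • R α‖ * ‖f‖ :=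
        ContinuousLinearMap.le_opNorm _ f
      _ ≤ M * ‖f‖ := by
        apply mul_le_mul_of_nonneg_right _ (norm_nonneg f)
        exact hM F (fun α => sg G α) (fun α => sg_pm G α)
    calc ‖(∑ α ∈ F, sg G α • R α) f‖ ^ 2 ≤ (M * ‖f‖) ^ 2 := by
          apply pow_le_pow_left₀ (norm_nonneg _) h2
      _ = M ^ 2 * ‖f‖ ^ 2 := by ring
  have := Finset.sum_le_sum hbound
  rw [rademacher_identity (fun α => R α f) F] at this
  rw [Finset.sum_const, Finset.card_powerset, nsmul_eq_mul] at this
  have h2n : (0:ℝ) < 2 ^ F.card := by positivity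
  push_cast at this
  nlinarith [this]

/-- Cauchy–Schwarz for infinite sums with uniform partial bounds. -/
lemma tsum_mul_le (a b : ι → ℝ) (ha : ∀ α, 0 ≤ a α) (hb : ∀ α, 0 ≤ b α)
    (A B : ℝ) (hA : 0 ≤ A) (hB : 0 ≤ B)
    (hsa : ∀ F : Finset ι, ∑ α ∈ F, (a α) ^ 2 ≤ A ^ 2)
    (hsb : ∀ F : Finset ι, ∑ α ∈ F, (b α) ^ 2 ≤ B ^ 2) :
    Summable (fun α => a α * b α) ∧ (∑' α, a α * b α) ≤ A * B := by
  have hpart : ∀ F : Finset ι, ∑ α ∈ F, a α * b α ≤ A * B := by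
    intro F
    have h1 : (∑ α ∈ F, a α * b α) ^ 2 ≤ (∑ α ∈ F, (a α)^2) * (∑ α ∈ F, (b α)^2) :=
      Finset.sum_mul_sq_le_sq_mul_sq F a b
    have h2 : (∑ α ∈ F, a α * b α) ^ 2 ≤ (A * B) ^ 2 := by
      calc (∑ α ∈ F, a α * b α) ^ 2 ≤ (∑ α ∈ F, (a α)^2) * (∑ α ∈ F, (b α)^2) := h1
        _ ≤ A ^ 2 * B ^ 2 := by
            apply mul_le_mul (hsa F) (hsb F) (Finset.sum_nonneg fun α _ => sq_nonneg _)
              (sq_nonneg A)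
        _ = (A * B) ^ 2 := by ring
    have h3 : 0 ≤ ∑ α ∈ F, a α * b α :=
      Finset.sum_nonneg fun α _ => mul_nonneg (ha α) (hb α)
    nlinarith [h2, h3, mul_nonneg hA hB]
  have hsum : Summable (fun α => a α * b α) :=
    summable_of_sum_le (fun α => mul_nonneg (ha α) (hb α)) hpart
  exact ⟨hsum, hsum.tsum_le_of_sum_le hpart⟩

lemma norm_sum_sq_orth (x : ι → H) (horth : ∀ α β, α ≠ β → ⟪x α, x β⟫_ℂ = 0)
    (t : Finset ι) : (‖∑ α ∈ t, x α‖ ^ 2 : ℝ) = ∑ α ∈ t, ‖x α‖ ^ 2 := by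
  classical
  have key : ⟪∑ α ∈ t, x α, ∑ α ∈ t, x α⟫_ℂ = ∑ α ∈ t, ⟪x α, x α⟫_ℂ := by
    rw [sum_inner]
    refine Finset.sum_congr rfl fun α hα => ?_
    rw [inner_sum, Finset.sum_eq_single α]
    · intro β hβ hne; exact horth α β (Ne.symm hne)
    · intro h; exact absurd hα h
  have cast1 : ∀ y : H, ⟪y, y⟫_ℂ = ((‖y‖ ^ 2 : ℝ) : ℂ) := fun y => by
    rw [inner_self_eq_norm_sq_to_K]; norm_cast
  simp only [cast1] at key
  exact_mod_cast key

lemma summable_of_orth [CompleteSpace H] (x : ι → H)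
    (horth : ∀ α β, α ≠ β → ⟪x α, x β⟫_ℂ = 0)
    (hs : Summable fun α => ‖x α‖ ^ 2) : Summable x := by
  rw [summable_iff_vanishing]
  intro e he
  rcases Metric.mem_nhds_iff.1 he with ⟨ε, hε, hball⟩
  have h2 : Metric.ball (0:ℝ) (ε^2) ∈ nhds 0 := Metric.ball_mem_nhds 0 (by positivity)
  obtain ⟨s, hs'⟩ := summable_iff_vanishing.mp hs _ h2
  refine ⟨s, fun t ht => ?_⟩
  have h3 := hs' t ht
  rw [Metric.mem_ball, Real.dist_eq, sub_zero] at h3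
  have h4 : ∑ α ∈ t, ‖x α‖ ^ 2 < ε ^ 2 := lt_of_le_of_lt (le_abs_self _) h3
  rw [← norm_sum_sq_orth x horth t] at h4
  apply hball
  rw [Metric.mem_ball, dist_zero_right]
  nlinarith [norm_nonneg (∑ α ∈ t, x α)]


end P2
section P3


variable {H : Type*} [NormedAddCommGroup H] [InnerProductSpace ℂ H] [CompleteSpace H]
variable {ι : Type*}


lemma coercive_arith (N a b K c TN : ℝ) (hN : 0 < N) (hK : 0 ≤ K) (hc : 0 ≤ c)
    (ha : 0 ≤ a) (hb : 0 ≤ b)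
    (h1 : N^2 ≤ 2*K*N*a + c*N*b) (h3 : a^2 + b^2 ≤ TN * N) :
    N ≤ 2*(2*K + c)^2 * TN := by
  have hN0 : N * N ≤ ((2*K + c) * (a + b)) * N := by
    nlinarith [mul_nonneg (mul_nonneg hK hN.le) hb, mul_nonneg (mul_nonneg hc hN.le) ha]
  have hN1 : N ≤ (2*K + c) * (a + b) := le_of_mul_le_mul_right hN0 hN
  have s1 : N^2 ≤ (2*K + c)^2 * (a+b)^2 := by
    have h := pow_le_pow_left₀ hN.le hN1 2
    calc N^2 ≤ ((2*K+c)*(a+b))^2 := h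
      _ = (2*K+c)^2*(a+b)^2 := by ring
  have s2 : (a+b)^2 ≤ 2*(a^2+b^2) := by nlinarith [sq_nonneg (a-b)]
  have s3 : N^2 ≤ 2*(2*K+c)^2*(TN*N) := by nlinarith [s1, s2, h3, sq_nonneg (2*K+c)]
  have s4 : N * N ≤ (2*(2*K+c)^2*TN) * N := by nlinarith [s3]
  exact le_of_mul_le_mul_right s4 hN

/-- Construct the Gram-type operator from the family. -/
lemma exists_T (P : ι → H →L[ℂ] H) (P₀ : H →L[ℂ] H)
    (hs1 : ∀ f g : H, Summable fun α => ⟪P α f, P α g⟫_ℂ)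
    (C : ℝ) (hC : 0 ≤ C)
    (hb : ∀ f g : H, ‖(∑' α, ⟪P α f, P α g⟫_ℂ) + ⟪P₀ f, P₀ g⟫_ℂ‖ ≤ C * (‖f‖ * ‖g‖)) :
    ∃ T : H →L[ℂ] H, ∀ f g : H,
      ⟪T f, g⟫_ℂ = (∑' α, ⟪P α f, P α g⟫_ℂ) + ⟪P₀ f, P₀ g⟫_ℂ := by
  have Dmk : ∀ f : H, ∃ D : H →L[ℂ] ℂ, (∀ g, D g = (∑' α, ⟪P α f, P α g⟫_ℂ) + ⟪P₀ f, P₀ g⟫_ℂ)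
      ∧ ‖D‖ ≤ C * ‖f‖ := by
    intro f
    have hadd : ∀ g g' : H, (∑' α, ⟪P α f, P α (g + g')⟫_ℂ) + ⟪P₀ f, P₀ (g + g')⟫_ℂ
        = ((∑' α, ⟪P α f, P α g⟫_ℂ) + ⟪P₀ f, P₀ g⟫_ℂ)
          + ((∑' α, ⟪P α f, P α g'⟫_ℂ) + ⟪P₀ f, P₀ g'⟫_ℂ) := by
      intro g g'
      have h1 : ∀ α, ⟪P α f, P α (g + g')⟫_ℂ = ⟪P α f, P α g⟫_ℂ + ⟪P α f, P α g'⟫_ℂ := by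
        intro α; rw [map_add, inner_add_right]
      rw [tsum_congr h1, (hs1 f g).tsum_add (hs1 f g'), map_add, inner_add_right]
      ring
    have hsmul : ∀ (c : ℂ) (g : H), (∑' α, ⟪P α f, P α (c • g)⟫_ℂ) + ⟪P₀ f, P₀ (c • g)⟫_ℂ
        = c * ((∑' α, ⟪P α f, P α g⟫_ℂ) + ⟪P₀ f, P₀ g⟫_ℂ) := by
      intro c g
      have h1 : ∀ α, ⟪P α f, P α (c • g)⟫_ℂ = c * ⟪P α f, P α g⟫_ℂ := by
        intro α; rw [map_smul, inner_smul_right]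
      rw [tsum_congr h1, tsum_mul_left, map_smul, inner_smul_right]
      ring
    refine ⟨LinearMap.mkContinuous
      { toFun := fun g => (∑' α, ⟪P α f, P α g⟫_ℂ) + ⟪P₀ f, P₀ g⟫_ℂ
        map_add' := hadd
        map_smul' := hsmul } (C * ‖f‖) (fun g => ?_), fun g => rfl, ?_⟩
    · calc ‖(∑' α, ⟪P α f, P α g⟫_ℂ) + ⟪P₀ f, P₀ g⟫_ℂ‖ ≤ C * (‖f‖ * ‖g‖) := hb f g
        _ = C * ‖f‖ * ‖g‖ := by ring
    · exact LinearMap.mkContinuous_norm_le _ (by positivity) _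
  choose D hD hDnorm using Dmk
  have key : ∀ f g : H, ⟪(InnerProductSpace.toDual ℂ H).symm (D f), g⟫_ℂ = D f g := by
    intro f g
    exact InnerProductSpace.toDual_symm_apply
  have hadd' : ∀ f f' : H, (InnerProductSpace.toDual ℂ H).symm (D (f + f'))
      = (InnerProductSpace.toDual ℂ H).symm (D f) + (InnerProductSpace.toDual ℂ H).symm (D f') := by
    intro f f'
    apply ext_inner_right ℂ
    intro g
    rw [key, inner_add_left, key, key, hD, hD, hD]
    have h1 : ∀ α, ⟪P α (f + f') , P α g⟫_ℂ = ⟪P α f, P α g⟫_ℂ + ⟪P α f', P α g⟫_ℂ := by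
      intro α; rw [map_add, inner_add_left]
    rw [tsum_congr h1, (hs1 f g).tsum_add (hs1 f' g), map_add, inner_add_left]
    ring
  have hsmul' : ∀ (c : ℂ) (f : H), (InnerProductSpace.toDual ℂ H).symm (D (c • f))
      = c • (InnerProductSpace.toDual ℂ H).symm (D f) := by
    intro c f
    apply ext_inner_right ℂ
    intro g
    rw [key, inner_smul_left, key, hD, hD]
    have h1 : ∀ α, ⟪P α (c • f) , P α g⟫_ℂ = (starRingEnd ℂ) c * ⟪P α f, P α g⟫_ℂ := by
      intro α; rw [map_smul, inner_smul_left]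
    rw [tsum_congr h1, tsum_mul_left, map_smul, inner_smul_left]
    ring
  refine ⟨LinearMap.mkContinuous
    { toFun := fun f => (InnerProductSpace.toDual ℂ H).symm (D f)
      map_add' := hadd'
      map_smul' := hsmul' } C (fun f => ?_), fun f g => by rw [← hD]; exact key f g⟩
  calc ‖(InnerProductSpace.toDual ℂ H).symm (D f)‖ = ‖D f‖ :=
        LinearIsometryEquiv.norm_map _ _
    _ ≤ C * ‖f‖ := hDnorm f

/-- A coercive operator with dense range is invertible. -/
lemma exists_inv (T : H →L[ℂ] H) (c : ℝ) (hc : 0 ≤ c) (hlow : ∀ f, ‖f‖ ≤ c * ‖T f‖)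
    (hdense : ∀ g : H, (∀ f, ⟪T f, g⟫_ℂ = 0) → g = 0) :
    ∃ T' : H →L[ℂ] H, T ∘L T' = 1 ∧ T' ∘L T = 1 := by
  have hanti : AntilipschitzWith c.toNNReal T := by
    apply ContinuousLinearMap.antilipschitz_of_bound
    intro x
    calc ‖x‖ ≤ c * ‖T x‖ := hlow x
      _ = (c.toNNReal : ℝ) * ‖T x‖ := by rw [Real.coe_toNNReal c hc]
  have hker : T.ker = ⊥ := by
    rw [Submodule.eq_bot_iff]
    intro x hx
    have hx0 : T x = 0 := hx
    have := hlow x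
    rw [hx0, norm_zero, mul_zero] at this
    exact norm_le_zero_iff.mp this
  have hclosed : IsClosed (Set.range T) := hanti.isClosed_range T.uniformContinuous
  have hclosed' : IsClosed ((T.range : Submodule ℂ H) : Set H) := by
    convert hclosed using 1
    exact LinearMap.coe_range _
  haveI : CompleteSpace T.range := hclosed'.completeSpace_coe
  have horth : (T.range)ᗮ = ⊥ := by
    rw [Submodule.eq_bot_iff]
    intro g hg
    apply hdense
    intro f
    have := (Submodule.mem_orthogonal _ g).mp hg (T f) (LinearMap.mem_range_self _ f)
    exact this
  have hrange : T.range = ⊤ := Submodule.orthogonal_eq_bot_iff.mp horth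
  let e := ContinuousLinearEquiv.ofBijective T hker hrange
  refine ⟨e.symm, ?_, ?_⟩
  · ext x
    have h1 : T ((e.symm : H →L[ℂ] H) x) = e (e.symm x) := rfl
    simp only [ContinuousLinearMap.comp_apply, ContinuousLinearMap.one_apply]
    rw [h1, e.apply_symm_apply]
  · ext x
    have h1 : (e.symm : H →L[ℂ] H) (T x) = e.symm (e x) := rfl
    simp only [ContinuousLinearMap.comp_apply, ContinuousLinearMap.one_apply]
    rw [h1, e.symm_apply_apply]

/-- Square root similarity package. -/
lemma exists_sqrt (T Tinv : H →L[ℂ] H) (hTpos : (0 : H →L[ℂ] H) ≤ T)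
    (h1 : T ∘L Tinv = 1) (h2 : Tinv ∘L T = 1) :
    ∃ S S' : H →L[ℂ] H, S ∘L S' = 1 ∧ S' ∘L S = 1 ∧ IsSelfAdjoint S ∧ IsSelfAdjoint S' ∧
      S ∘L T = S' ∧ Tinv ∘L S' = S := by
  have h1' : T * Tinv = 1 := h1
  have h2' : Tinv * T = 1 := h2
  set R := CFC.sqrt T with hR
  have hRnn : (0 : H →L[ℂ] H) ≤ R := CFC.sqrt_nonneg (a := T)
  have hRsa : IsSelfAdjoint R := IsSelfAdjoint.of_nonneg hRnn
  have hTsa : IsSelfAdjoint T := IsSelfAdjoint.of_nonneg hTpos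
  have hRR : R * R = T := by
    have := CFC.sq_sqrt T hTpos
    rwa [sq] at this
  have hRT : R * T = T * R := by
    rw [← hRR, mul_assoc]
  have hcomm : R * Tinv = Tinv * R := by
    calc R * Tinv = (Tinv * T) * (R * Tinv) := by rw [h2', one_mul]
      _ = Tinv * (T * R) * Tinv := by simp only [mul_assoc]
      _ = Tinv * (R * T) * Tinv := by rw [hRT]
      _ = (Tinv * R) * (T * Tinv) := by simp only [mul_assoc]
      _ = Tinv * R := by rw [h1', mul_one]
  have hTinvSa : IsSelfAdjoint Tinv := by
    have hstar : star Tinv * T = 1 := by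
      calc star Tinv * T = star Tinv * star T := by rw [hTsa.star_eq]
        _ = star (T * Tinv) := by rw [star_mul]
        _ = 1 := by rw [h1']; exact star_one _
    calc star Tinv = star Tinv * (T * Tinv) := by rw [h1', mul_one]
      _ = (star Tinv * T) * Tinv := by simp only [mul_assoc]
      _ = Tinv := by rw [hstar, one_mul]
  refine ⟨R * Tinv, R, ?_, ?_, ?_, hRsa, ?_, ?_⟩
  · show (R * Tinv) * R = 1
    calc (R * Tinv) * R = R * (Tinv * R) := by simp only [mul_assoc]
      _ = R * (R * Tinv) := by rw [hcomm]
      _ = T * Tinv := by rw [← mul_assoc, hRR]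
      _ = 1 := h1'
  · show R * (R * Tinv) = 1
    rw [← mul_assoc, hRR, h1']
  · show IsSelfAdjoint (R * Tinv)
    rw [IsSelfAdjoint, star_mul, hTinvSa.star_eq, hRsa.star_eq, hcomm]
  · show (R * Tinv) * T = R
    calc (R * Tinv) * T = R * (Tinv * T) := by simp only [mul_assoc]
      _ = R := by rw [h2', mul_one]
  · show Tinv * R = R * Tinv
    exact hcomm.symm


end P3
end SimAux

/-- The similarity orthogonal–decomposition theorem: given a family `(Q_α)` of pairwise
commuting, mutually annihilating projections on `M(X)` with property R, together with `Q₀`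
completing them to a decomposition of the identity, the associated operators `P_α, P₀` on `H`
are simultaneously similar, via a single invertible `S`, to pairwise orthogonal self-adjoint
projections summing to the identity and commuting with `S⁻¹Φ(u)S`. -/
theorem similarity_orthogonal_decomposition
    (X : Set ℂ) [CompactSpace X] (hX : X.Nonempty)
    {H : Type*} [NormedAddCommGroup H] [InnerProductSpace ℂ H] [CompleteSpace H]
    (Φ : RX X →ₐ[ℂ] (H →L[ℂ] H)) (E : ElemSpectralMeasures X Φ)
    {ι : Type*} (Q : ι → (MX X →L[ℂ] MX X)) (Q₀ : MX X →L[ℂ] MX X)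
    (hidem : ∀ α, Q α ∘L Q α = Q α) (hidem₀ : Q₀ ∘L Q₀ = Q₀)
    (hR : ∀ α, HasPropertyR X (Q α)) (hR₀ : HasPropertyR X Q₀)
    (hcomm : ∀ α β, Q α ∘L Q β = Q β ∘L Q α)
    (hcomm₀ : ∀ α, Q α ∘L Q₀ = Q₀ ∘L Q α)
    (horth : ∀ α β, α ≠ β → Q α ∘L Q β = 0)
    (horth₀ : ∀ α, Q₀ ∘L Q α = 0)
    (hsum : ∀ L : MX X, HasSum (fun α => Q α L) (L - Q₀ L))
    (P : ι → (H →L[ℂ] H)) (P₀ : H →L[ℂ] H)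
    (hP : ∀ (α) (f g : H), ⟪g, P α f⟫_ℂ = Q α (E.μ f g) (1 : C(X, ℂ)))
    (hP₀ : ∀ f g : H, ⟪g, P₀ f⟫_ℂ = Q₀ (E.μ f g) (1 : C(X, ℂ))) :
    ∃ S S' : H →L[ℂ] H, S ∘L S' = 1 ∧ S' ∘L S = 1 ∧
      (∀ α, IsSelfAdjoint (S' ∘L P α ∘L S) ∧
        (S' ∘L P α ∘L S) ∘L (S' ∘L P α ∘L S) = S' ∘L P α ∘L S) ∧
      (IsSelfAdjoint (S' ∘L P₀ ∘L S) ∧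
        (S' ∘L P₀ ∘L S) ∘L (S' ∘L P₀ ∘L S) = S' ∘L P₀ ∘L S) ∧
      (∀ α β, α ≠ β → (S' ∘L P α ∘L S) ∘L (S' ∘L P β ∘L S) = 0) ∧
      (∀ α, (S' ∘L P α ∘L S) ∘L (S' ∘L P₀ ∘L S) = 0 ∧
        (S' ∘L P₀ ∘L S) ∘L (S' ∘L P α ∘L S) = 0) ∧
      (∀ f : H, HasSum (fun α => (S' ∘L P α ∘L S) f) (f - (S' ∘L P₀ ∘L S) f)) ∧
      (∀ (u : RX X) (α), (S' ∘L Φ u ∘L S) ∘L (S' ∘L P α ∘L S)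
          = (S' ∘L P α ∘L S) ∘L (S' ∘L Φ u ∘L S)) ∧
      (∀ u : RX X, (S' ∘L Φ u ∘L S) ∘L (S' ∘L P₀ ∘L S)
          = (S' ∘L P₀ ∘L S) ∘L (S' ∘L Φ u ∘L S)) := by
  classical
  have ofQeq : ∀ (Qa Qb Qc : MX X →L[ℂ] MX X), HasPropertyR X Qa → HasPropertyR X Qb →
      Qa ∘L Qb = Qc →
      ∀ (Ba Bb Bc : H →L[ℂ] H),
        (∀ f g, ⟪g, Ba f⟫_ℂ = Qa (E.μ f g) 1) →
        (∀ f g, ⟪g, Bb f⟫_ℂ = Qb (E.μ f g) 1) →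
        (∀ f g, ⟪g, Bc f⟫_ℂ = Qc (E.μ f g) 1) →
        Ba ∘L Bb = Bc := by
    intro Qa Qb Qc ha hb hcc Ba Bb Bc hBa hBb hBc
    ext f
    apply ext_inner_left ℂ
    intro g
    show ⟪g, Ba (Bb f)⟫_ℂ = ⟪g, Bc f⟫_ℂ
    rw [SimAux.comp_eval E ha hb hBa hBb f g, hBc f g]
    have h : Qa (Qb (E.μ f g)) = Qc (E.μ f g) := by
      rw [← hcc]; rfl
    rw [h]
  have ofQzero : ∀ (Qa Qb : MX X →L[ℂ] MX X), HasPropertyR X Qa → HasPropertyR X Qb →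
      Qa ∘L Qb = 0 →
      ∀ (Ba Bb : H →L[ℂ] H),
        (∀ f g, ⟪g, Ba f⟫_ℂ = Qa (E.μ f g) 1) →
        (∀ f g, ⟪g, Bb f⟫_ℂ = Qb (E.μ f g) 1) →
        Ba ∘L Bb = 0 := by
    intro Qa Qb ha hb hcc Ba Bb hBa hBb
    ext f
    apply ext_inner_left ℂ
    intro g
    show ⟪g, Ba (Bb f)⟫_ℂ = ⟪g, (0 : H →L[ℂ] H) f⟫_ℂ
    rw [SimAux.comp_eval E ha hb hBa hBb f g]
    have h : Qa (Qb (E.μ f g)) = 0 := by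
      have h2 : Qa (Qb (E.μ f g)) = (Qa ∘L Qb) (E.μ f g) := rfl
      rw [h2, hcc]; rfl
    rw [h]
    simp
  have hQα0 : ∀ α, Q α ∘L Q₀ = 0 := fun α => by rw [hcomm₀ α]; exact horth₀ α
  have Pidem : ∀ α, P α ∘L P α = P α :=
    fun α => ofQeq _ _ _ (hR α) (hR α) (hidem α) _ _ _ (hP α) (hP α) (hP α)
  have P₀idem : P₀ ∘L P₀ = P₀ := ofQeq _ _ _ hR₀ hR₀ hidem₀ _ _ _ hP₀ hP₀ hP₀
  have Porth : ∀ α β, α ≠ β → P α ∘L P β = 0 :=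
    fun α β h => ofQzero _ _ (hR α) (hR β) (horth α β h) _ _ (hP α) (hP β)
  have P₀Pα : ∀ α, P₀ ∘L P α = 0 :=
    fun α => ofQzero _ _ hR₀ (hR α) (horth₀ α) _ _ hP₀ (hP α)
  have PαP₀ : ∀ α, P α ∘L P₀ = 0 :=
    fun α => ofQzero _ _ (hR α) hR₀ (hQα0 α) _ _ (hP α) hP₀
  have commPhi : ∀ (u : RX X) α, P α ∘L Φ u = Φ u ∘L P α :=
    fun u α => SimAux.commute_phi E (hR α) (hP α) u
  have commPhi₀ : ∀ u : RX X, P₀ ∘L Φ u = Φ u ∘L P₀ :=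
    fun u => SimAux.commute_phi E hR₀ hP₀ u
  -- weak summability
  have W : ∀ f g : H, HasSum (fun α => ⟪g, P α f⟫_ℂ) ⟪g, f - P₀ f⟫_ℂ := by
    intro f g
    have h1 := (hsum (E.μ f g)).mapL (ContinuousLinearMap.apply ℂ ℂ (1 : C(X,ℂ)))
    have h3 : (ContinuousLinearMap.apply ℂ ℂ (1 : C(X,ℂ))) (E.μ f g - Q₀ (E.μ f g))
        = ⟪g, f - P₀ f⟫_ℂ := by
      show (E.μ f g - Q₀ (E.μ f g)) (1 : C(X,ℂ)) = _
      rw [ContinuousLinearMap.sub_apply, SimAux.mu_one E f g, ← hP₀ f g, inner_sub_right]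
    rw [← h3]
    have h4 : (fun α => ⟪g, P α f⟫_ℂ)
        = fun α => (ContinuousLinearMap.apply ℂ ℂ (1 : C(X,ℂ))) (Q α (E.μ f g)) := by
      funext α
      exact hP α f g
    rw [h4]
    exact h1
  -- uniform bound on partial sums
  have hKex : ∃ K : ℝ, 0 ≤ K ∧ ∀ F : Finset ι, ‖∑ α ∈ F, P α‖ ≤ K := by
    have step1 : ∀ f : H, ∃ C, ∀ F : Finset ι, ‖(∑ α ∈ F, P α) f‖ ≤ C := by
      intro f
      have hpt : ∀ g : H, ∃ C, ∀ F : Finset ι,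
          ‖(innerSL ℂ ((∑ α ∈ F, P α) f)) g‖ ≤ C := by
        intro g
        have hsummable : Summable (fun α => ‖⟪g, P α f⟫_ℂ‖) :=
          summable_norm_iff.mpr (W f g).summable
        refine ⟨∑' α, ‖⟪g, P α f⟫_ℂ‖, fun F => ?_⟩
        have h1 : (innerSL ℂ ((∑ α ∈ F, P α) f)) g = ⟪(∑ α ∈ F, P α) f, g⟫_ℂ := rfl
        have h2 : ‖⟪(∑ α ∈ F, P α) f, g⟫_ℂ‖ = ‖⟪g, (∑ α ∈ F, P α) f⟫_ℂ‖ := by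
          rw [← inner_conj_symm]
          exact RCLike.norm_conj _
        have h3 : ⟪g, (∑ α ∈ F, P α) f⟫_ℂ = ∑ α ∈ F, ⟪g, P α f⟫_ℂ := by
          rw [ContinuousLinearMap.sum_apply, inner_sum]
        calc ‖(innerSL ℂ ((∑ α ∈ F, P α) f)) g‖ = ‖∑ α ∈ F, ⟪g, P α f⟫_ℂ‖ := by
              rw [h1, h2, h3]
          _ ≤ ∑ α ∈ F, ‖⟪g, P α f⟫_ℂ‖ := norm_sum_le _ _
          _ ≤ ∑' α, ‖⟪g, P α f⟫_ℂ‖ :=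
              hsummable.sum_le_tsum F (fun _ _ => norm_nonneg _)
      obtain ⟨C, hC⟩ := banach_steinhaus
        (g := fun F : Finset ι => innerSL ℂ ((∑ α ∈ F, P α) f)) hpt
      refine ⟨C, fun F => ?_⟩
      have := hC F
      rwa [innerSL_apply_norm] at this
    obtain ⟨K0, hK0⟩ := banach_steinhaus (g := fun F : Finset ι => ∑ α ∈ F, P α) step1
    exact ⟨max K0 0, le_max_right _ _, fun F => (hK0 F).trans (le_max_left _ _)⟩
  obtain ⟨K, hK0, hK⟩ := hKex
  have hM : ∀ (F : Finset ι) (ε : ι → ℂ), (∀ α, ε α = 1 ∨ ε α = -1) →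
      ‖∑ α ∈ F, ε α • P α‖ ≤ 2 * K := by
    intro F ε hε
    have h1 : ∑ α ∈ F.filter (fun α => ε α = 1), ε α • P α
        = ∑ α ∈ F.filter (fun α => ε α = 1), P α := by
      apply Finset.sum_congr rfl
      intro α hα
      rw [(Finset.mem_filter.mp hα).2, one_smul]
    have h2 : ∑ α ∈ F.filter (fun α => ¬ ε α = 1), ε α • P α
        = - ∑ α ∈ F.filter (fun α => ¬ ε α = 1), P α := by
      rw [← Finset.sum_neg_distrib]
      apply Finset.sum_congr rfl
      intro α hα
      have h3 : ε α = -1 := (hε α).resolve_left (Finset.mem_filter.mp hα).2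
      rw [h3, neg_one_smul]
    calc ‖∑ α ∈ F, ε α • P α‖
        = ‖(∑ α ∈ F.filter (fun α => ε α = 1), P α)
            - ∑ α ∈ F.filter (fun α => ¬ ε α = 1), P α‖ := by
          rw [← Finset.sum_filter_add_sum_filter_not F (fun α => ε α = 1) (fun α => ε α • P α),
            h1, h2, sub_eq_add_neg]
      _ ≤ ‖∑ α ∈ F.filter (fun α => ε α = 1), P α‖
            + ‖∑ α ∈ F.filter (fun α => ¬ ε α = 1), P α‖ := norm_sub_le _ _
      _ ≤ K + K := add_le_add (hK _) (hK _)
      _ = 2 * K := by ring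
  have sqP : ∀ (F : Finset ι) (f : H), ∑ α ∈ F, ‖P α f‖ ^ 2 ≤ (2*K)^2 * ‖f‖^2 :=
    SimAux.sq_sum_le P (2*K) hM
  have hMadj : ∀ (F : Finset ι) (ε : ι → ℂ), (∀ α, ε α = 1 ∨ ε α = -1) →
      ‖∑ α ∈ F, ε α • ContinuousLinearMap.adjoint (P α)‖ ≤ 2 * K := by
    intro F ε hε
    have h1 : ∑ α ∈ F, ε α • ContinuousLinearMap.adjoint (P α)
        = ContinuousLinearMap.adjoint (∑ α ∈ F, (starRingEnd ℂ) (ε α) • P α) := by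
      rw [map_sum]
      apply Finset.sum_congr rfl
      intro α _
      rw [LinearIsometryEquiv.map_smulₛₗ]
      congr 1
      exact (Complex.conj_conj (ε α)).symm
    rw [h1, LinearIsometryEquiv.norm_map]
    refine hM F (fun α => (starRingEnd ℂ) (ε α)) (fun α => ?_)
    rcases hε α with h | h <;> simp [h]
  have sqA : ∀ (F : Finset ι) (f : H),
      ∑ α ∈ F, ‖ContinuousLinearMap.adjoint (P α) f‖ ^ 2 ≤ (2*K)^2 * ‖f‖^2 :=
    SimAux.sq_sum_le (fun α => ContinuousLinearMap.adjoint (P α)) (2*K) hMadj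
  have sumsqP : ∀ f : H, Summable (fun α => ‖P α f‖ ^ 2) := fun f =>
    summable_of_sum_le (fun α => sq_nonneg _) (fun F => sqP F f)
  have sumsqA : ∀ f : H, Summable (fun α => ‖ContinuousLinearMap.adjoint (P α) f‖ ^ 2) :=
    fun f => summable_of_sum_le (fun α => sq_nonneg _) (fun F => sqA F f)
  have sumInner : ∀ f g : H, Summable (fun α => ⟪P α f, P α g⟫_ℂ) := by
    intro f g
    apply Summable.of_norm_bounded (g := fun α => (‖P α f‖^2 + ‖P α g‖^2)/2)
      (((sumsqP f).add (sumsqP g)).div_const 2)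
    intro α
    have h1 : ‖⟪P α f, P α g⟫_ℂ‖ ≤ ‖P α f‖ * ‖P α g‖ := norm_inner_le_norm _ _
    nlinarith [sq_nonneg (‖P α f‖ - ‖P α g‖)]
  -- the quadratic form bound
  have CS : ∀ f g : H, Summable (fun α => ‖P α f‖ * ‖P α g‖)
      ∧ (∑' α, ‖P α f‖ * ‖P α g‖) ≤ (2*K*‖f‖) * (2*K*‖g‖) := by
    intro f g
    apply SimAux.tsum_mul_le (fun α => ‖P α f‖) (fun α => ‖P α g‖)
      (fun α => norm_nonneg _) (fun α => norm_nonneg _)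
      (2*K*‖f‖) (2*K*‖g‖) (by positivity) (by positivity)
    · intro F
      calc ∑ α ∈ F, ‖P α f‖^2 ≤ (2*K)^2 * ‖f‖^2 := sqP F f
        _ = (2*K*‖f‖)^2 := by ring
    · intro F
      calc ∑ α ∈ F, ‖P α g‖^2 ≤ (2*K)^2 * ‖g‖^2 := sqP F g
        _ = (2*K*‖g‖)^2 := by ring
  have hbform : ∀ f g : H, ‖(∑' α, ⟪P α f, P α g⟫_ℂ) + ⟪P₀ f, P₀ g⟫_ℂ‖
      ≤ ((2*K)^2 + ‖P₀‖^2) * (‖f‖ * ‖g‖) := by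
    intro f g
    have hsn : Summable (fun α => ‖⟪P α f, P α g⟫_ℂ‖) :=
      Summable.of_nonneg_of_le (fun α => norm_nonneg _)
        (fun α => norm_inner_le_norm _ _) (CS f g).1
    have h1 : ‖∑' α, ⟪P α f, P α g⟫_ℂ‖ ≤ (2*K)^2 * (‖f‖ * ‖g‖) := by
      calc ‖∑' α, ⟪P α f, P α g⟫_ℂ‖ ≤ ∑' α, ‖⟪P α f, P α g⟫_ℂ‖ :=
            norm_tsum_le_tsum_norm hsn
        _ ≤ ∑' α, ‖P α f‖ * ‖P α g‖ :=
            Summable.tsum_le_tsum (fun α => norm_inner_le_norm _ _) hsn (CS f g).1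
        _ ≤ (2*K*‖f‖) * (2*K*‖g‖) := (CS f g).2
        _ = (2*K)^2 * (‖f‖ * ‖g‖) := by ring
    have h2 : ‖⟪P₀ f, P₀ g⟫_ℂ‖ ≤ ‖P₀‖^2 * (‖f‖ * ‖g‖) := by
      calc ‖⟪P₀ f, P₀ g⟫_ℂ‖ ≤ ‖P₀ f‖ * ‖P₀ g‖ := norm_inner_le_norm _ _
        _ ≤ (‖P₀‖ * ‖f‖) * (‖P₀‖ * ‖g‖) :=
            mul_le_mul (P₀.le_opNorm f) (P₀.le_opNorm g) (norm_nonneg _)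
              (by positivity)
        _ = ‖P₀‖^2 * (‖f‖ * ‖g‖) := by ring
    calc ‖(∑' α, ⟪P α f, P α g⟫_ℂ) + ⟪P₀ f, P₀ g⟫_ℂ‖
        ≤ ‖∑' α, ⟪P α f, P α g⟫_ℂ‖ + ‖⟪P₀ f, P₀ g⟫_ℂ‖ := norm_add_le _ _
      _ ≤ (2*K)^2 * (‖f‖ * ‖g‖) + ‖P₀‖^2 * (‖f‖ * ‖g‖) := add_le_add h1 h2
      _ = ((2*K)^2 + ‖P₀‖^2) * (‖f‖ * ‖g‖) := by ring
  obtain ⟨T, hT⟩ := SimAux.exists_T P P₀ sumInner ((2*K)^2 + ‖P₀‖^2) (by positivity) hbform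
  -- T is self-adjoint
  have hTsym : ∀ f g : H, ⟪T f, g⟫_ℂ = ⟪f, T g⟫_ℂ := by
    intro f g
    rw [hT f g]
    calc (∑' α, ⟪P α f, P α g⟫_ℂ) + ⟪P₀ f, P₀ g⟫_ℂ
        = (∑' α, star ⟪P α g, P α f⟫_ℂ) + star ⟪P₀ g, P₀ f⟫_ℂ := by
          congr 1
          · exact tsum_congr fun α => (inner_conj_symm _ _).symm
          · exact (inner_conj_symm _ _).symm
      _ = star ((∑' α, ⟪P α g, P α f⟫_ℂ) + ⟪P₀ g, P₀ f⟫_ℂ) := by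
          rw [star_add, tsum_star]
      _ = star ⟪T g, f⟫_ℂ := by rw [hT g f]
      _ = ⟪f, T g⟫_ℂ := inner_conj_symm _ _
  have hTsa : IsSelfAdjoint T :=
    ContinuousLinearMap.isSelfAdjoint_iff_isSymmetric.mpr (fun f g => hTsym f g)
  -- the value of the form on the diagonal
  have hTdiag : ∀ f : H, ⟪T f, f⟫_ℂ = (((∑' α, ‖P α f‖^2) + ‖P₀ f‖^2 : ℝ) : ℂ) := by
    intro f
    rw [hT f f]
    have h1 : ∀ α, ⟪P α f, P α f⟫_ℂ = ((‖P α f‖^2 : ℝ) : ℂ) := fun α => by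
      rw [inner_self_eq_norm_sq_to_K]; norm_cast
    have hcast : ((∑' α, ‖P α f‖^2 : ℝ) : ℂ) = ∑' α, ((‖P α f‖^2 : ℝ) : ℂ) := by
      have h2 := ContinuousLinearMap.map_tsum Complex.ofRealCLM (sumsqP f)
      simpa using h2
    rw [tsum_congr h1, inner_self_eq_norm_sq_to_K, Complex.ofReal_add, hcast]
    push_cast
    rfl
  -- intertwining: T Pβ = Pβ* T
  have hTP : ∀ β, T ∘L P β = ContinuousLinearMap.adjoint (P β) ∘L T := by
    intro β
    ext f
    apply ext_inner_right ℂ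
    intro g
    show ⟪T (P β f), g⟫_ℂ = ⟪ContinuousLinearMap.adjoint (P β) (T f), g⟫_ℂ
    rw [hT (P β f) g, ContinuousLinearMap.adjoint_inner_left, hT f (P β g)]
    have hL : ∀ α, ⟪P α (P β f), P α g⟫_ℂ = if α = β then ⟪P β f, P β g⟫_ℂ else 0 := by
      intro α
      by_cases h : α = β
      · subst h
        have : P α (P α f) = P α f := by
          have := congrArg (fun (A : H →L[ℂ] H) => A f) (Pidem α)
          simpa using this
        rw [this, if_pos rfl]
      · have : P α (P β f) = 0 := by
          have := congrArg (fun (A : H →L[ℂ] H) => A f) (Porth α β h)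
          simpa using this
        rw [this, if_neg h, inner_zero_left]
    have hR' : ∀ α, ⟪P α f, P α (P β g)⟫_ℂ = if α = β then ⟪P β f, P β g⟫_ℂ else 0 := by
      intro α
      by_cases h : α = β
      · subst h
        have : P α (P α g) = P α g := by
          have := congrArg (fun (A : H →L[ℂ] H) => A g) (Pidem α)
          simpa using this
        rw [this, if_pos rfl]
      · have : P α (P β g) = 0 := by
          have := congrArg (fun (A : H →L[ℂ] H) => A g) (Porth α β h)
          simpa using this
        rw [this, if_neg h, inner_zero_right]
    have hz1 : P₀ (P β f) = 0 := by
      have := congrArg (fun (A : H →L[ℂ] H) => A f) (P₀Pα β)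
      simpa using this
    have hz2 : P₀ (P β g) = 0 := by
      have := congrArg (fun (A : H →L[ℂ] H) => A g) (P₀Pα β)
      simpa using this
    rw [tsum_congr hL, tsum_congr hR', tsum_ite_eq, hz1, hz2,
      inner_zero_left, inner_zero_right]
  have hTP₀ : T ∘L P₀ = ContinuousLinearMap.adjoint P₀ ∘L T := by
    ext f
    apply ext_inner_right ℂ
    intro g
    show ⟪T (P₀ f), g⟫_ℂ = ⟪ContinuousLinearMap.adjoint P₀ (T f), g⟫_ℂ
    rw [hT (P₀ f) g, ContinuousLinearMap.adjoint_inner_left, hT f (P₀ g)]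
    have hL : ∀ α, ⟪P α (P₀ f), P α g⟫_ℂ = 0 := by
      intro α
      have : P α (P₀ f) = 0 := by
        have := congrArg (fun (A : H →L[ℂ] H) => A f) (PαP₀ α)
        simpa using this
      rw [this, inner_zero_left]
    have hR' : ∀ α, ⟪P α f, P α (P₀ g)⟫_ℂ = 0 := by
      intro α
      have : P α (P₀ g) = 0 := by
        have := congrArg (fun (A : H →L[ℂ] H) => A g) (PαP₀ α)
        simpa using this
      rw [this, inner_zero_right]
    have hz1 : P₀ (P₀ f) = P₀ f := by
      have := congrArg (fun (A : H →L[ℂ] H) => A f) P₀idem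
      simpa using this
    have hz2 : P₀ (P₀ g) = P₀ g := by
      have := congrArg (fun (A : H →L[ℂ] H) => A g) P₀idem
      simpa using this
    rw [tsum_congr hL, tsum_congr hR', tsum_zero, hz1, hz2]
  -- the basic coercivity inequality
  have hstar : ∀ f : H, ‖f‖^2 ≤ 2*K*‖f‖*Real.sqrt (∑' α, ‖P α f‖^2)
      + ‖P₀‖*‖f‖*‖P₀ f‖ := by
    intro f
    set a : ℝ := Real.sqrt (∑' α, ‖P α f‖^2) with ha
    have ha0 : 0 ≤ a := Real.sqrt_nonneg _
    have ha2 : a^2 = ∑' α, ‖P α f‖^2 :=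
      Real.sq_sqrt (tsum_nonneg (fun α => sq_nonneg _))
    have hWf : (∑' α, ⟪f, P α f⟫_ℂ) = ⟪f, f⟫_ℂ - ⟪f, P₀ f⟫_ℂ := by
      rw [(W f f).tsum_eq, inner_sub_right]
    have hsum1 : Summable (fun α => ‖⟪f, P α f⟫_ℂ‖) :=
      summable_norm_iff.mpr (W f f).summable
    have hCS2 : Summable (fun α => ‖ContinuousLinearMap.adjoint (P α) f‖ * ‖P α f‖)
        ∧ (∑' α, ‖ContinuousLinearMap.adjoint (P α) f‖ * ‖P α f‖) ≤ (2*K*‖f‖) * a := by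
      apply SimAux.tsum_mul_le _ _ (fun α => norm_nonneg _) (fun α => norm_nonneg _)
        (2*K*‖f‖) a (by positivity) ha0
      · intro F
        calc ∑ α ∈ F, ‖ContinuousLinearMap.adjoint (P α) f‖^2 ≤ (2*K)^2 * ‖f‖^2 := sqA F f
          _ = (2*K*‖f‖)^2 := by ring
      · intro F
        calc ∑ α ∈ F, ‖P α f‖^2 ≤ ∑' α, ‖P α f‖^2 :=
              (sumsqP f).sum_le_tsum F (fun _ _ => sq_nonneg _)
          _ = a^2 := ha2.symm
    have hterm : ∀ α, ‖⟪f, P α f⟫_ℂ‖ ≤ ‖ContinuousLinearMap.adjoint (P α) f‖ * ‖P α f‖ := by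
      intro α
      have h5 : P α (P α f) = P α f := by
        have := congrArg (fun (A : H →L[ℂ] H) => A f) (Pidem α)
        simpa using this
      calc ‖⟪f, P α f⟫_ℂ‖ = ‖⟪f, P α (P α f)⟫_ℂ‖ := by rw [h5]
        _ = ‖⟪ContinuousLinearMap.adjoint (P α) f, P α f⟫_ℂ‖ := by
            rw [ContinuousLinearMap.adjoint_inner_left]
        _ ≤ ‖ContinuousLinearMap.adjoint (P α) f‖ * ‖P α f‖ := norm_inner_le_norm _ _
    have h6 : ‖⟪f, f⟫_ℂ‖ ≤ (∑' α, ‖⟪f, P α f⟫_ℂ‖) + ‖⟪f, P₀ f⟫_ℂ‖ := by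
      calc ‖⟪f, f⟫_ℂ‖ = ‖(∑' α, ⟪f, P α f⟫_ℂ) + ⟪f, P₀ f⟫_ℂ‖ := by
            rw [hWf]; congr 1; ring
        _ ≤ ‖∑' α, ⟪f, P α f⟫_ℂ‖ + ‖⟪f, P₀ f⟫_ℂ‖ := norm_add_le _ _
        _ ≤ (∑' α, ‖⟪f, P α f⟫_ℂ‖) + ‖⟪f, P₀ f⟫_ℂ‖ :=
            add_le_add_left (norm_tsum_le_tsum_norm hsum1) _
    have h7 : (∑' α, ‖⟪f, P α f⟫_ℂ‖) ≤ (2*K*‖f‖) * a :=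
      le_trans (Summable.tsum_le_tsum hterm hsum1 hCS2.1) hCS2.2
    have h8 : ‖⟪f, P₀ f⟫_ℂ‖ ≤ ‖P₀‖ * ‖f‖ * ‖P₀ f‖ := by
      have h5 : P₀ (P₀ f) = P₀ f := by
        have := congrArg (fun (A : H →L[ℂ] H) => A f) P₀idem
        simpa using this
      calc ‖⟪f, P₀ f⟫_ℂ‖ = ‖⟪f, P₀ (P₀ f)⟫_ℂ‖ := by rw [h5]
        _ = ‖⟪ContinuousLinearMap.adjoint P₀ f, P₀ f⟫_ℂ‖ := by
            rw [ContinuousLinearMap.adjoint_inner_left]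
        _ ≤ ‖ContinuousLinearMap.adjoint P₀ f‖ * ‖P₀ f‖ := norm_inner_le_norm _ _
        _ ≤ (‖ContinuousLinearMap.adjoint P₀‖ * ‖f‖) * ‖P₀ f‖ :=
            mul_le_mul_of_nonneg_right (ContinuousLinearMap.le_opNorm _ f) (norm_nonneg _)
        _ = ‖P₀‖ * ‖f‖ * ‖P₀ f‖ := by
            rw [LinearIsometryEquiv.norm_map]
    have h9 : ‖⟪f, f⟫_ℂ‖ = ‖f‖^2 := by
      rw [inner_self_eq_norm_sq_to_K, norm_pow]
      simp
    calc ‖f‖^2 = ‖⟪f, f⟫_ℂ‖ := h9.symm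
      _ ≤ (∑' α, ‖⟪f, P α f⟫_ℂ‖) + ‖⟪f, P₀ f⟫_ℂ‖ := h6
      _ ≤ (2*K*‖f‖) * a + ‖P₀‖ * ‖f‖ * ‖P₀ f‖ := add_le_add h7 h8
      _ = 2*K*‖f‖*a + ‖P₀‖*‖f‖*‖P₀ f‖ := by ring
  -- coercivity
  have hc10 : (0:ℝ) ≤ 2*K + ‖P₀‖ := by positivity
  have hlow : ∀ f : H, ‖f‖ ≤ (2*(2*K + ‖P₀‖)^2) * ‖T f‖ := by
    intro f
    by_cases hf : f = 0
    · simp [hf]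
    have hNpos : 0 < ‖f‖ := norm_pos_iff.mpr hf
    obtain ⟨a, ha0, ha2, haeq⟩ : ∃ a : ℝ, 0 ≤ a ∧ a^2 = (∑' α, ‖P α f‖^2)
        ∧ a = Real.sqrt (∑' α, ‖P α f‖^2) :=
      ⟨Real.sqrt _, Real.sqrt_nonneg _,
        Real.sq_sqrt (tsum_nonneg fun α => sq_nonneg _), rfl⟩
    have h1 : ‖f‖^2 ≤ 2*K*‖f‖*a + ‖P₀‖*‖f‖*‖P₀ f‖ := by
      rw [haeq]; exact hstar f
    have h3 : a^2 + ‖P₀ f‖^2 ≤ ‖T f‖ * ‖f‖ := by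
      have h4 : ⟪T f, f⟫_ℂ = ((a^2 + ‖P₀ f‖^2 : ℝ) : ℂ) := by rw [hTdiag f, ha2]
      have h5 : ‖⟪T f, f⟫_ℂ‖ ≤ ‖T f‖ * ‖f‖ := norm_inner_le_norm _ _
      rw [h4] at h5
      have h6 : ‖((a^2 + ‖P₀ f‖^2 : ℝ) : ℂ)‖ = a^2 + ‖P₀ f‖^2 := by
        rw [Complex.norm_real]
        exact Real.norm_of_nonneg (by positivity)
      rwa [h6] at h5
    exact SimAux.coercive_arith ‖f‖ a ‖P₀ f‖ K ‖P₀‖ ‖T f‖ hNpos hK0 (norm_nonneg _)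
      ha0 (norm_nonneg _) h1 h3
  have hdense : ∀ g : H, (∀ f, ⟪T f, g⟫_ℂ = 0) → g = 0 := by
    intro g hg
    have h1 : ⟪T g, g⟫_ℂ = 0 := hg g
    rw [hTdiag g] at h1
    have h2 : (∑' α, ‖P α g‖^2) + ‖P₀ g‖^2 = 0 := by exact_mod_cast h1
    have h3a : (∑' α, ‖P α g‖^2) = 0 := by
      have hA : 0 ≤ ∑' α, ‖P α g‖^2 := tsum_nonneg (fun α : ι => sq_nonneg ‖P α g‖)
      have hB := sq_nonneg ‖P₀ g‖
      linarith
    have h3b : ‖P₀ g‖ = 0 := by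
      have hA : 0 ≤ ∑' α, ‖P α g‖^2 := tsum_nonneg (fun α : ι => sq_nonneg ‖P α g‖)
      have h6 : ‖P₀ g‖^2 = 0 := by linarith
      exact pow_eq_zero_iff two_ne_zero |>.mp h6
    have h4 := hstar g
    rw [h3a, Real.sqrt_zero, h3b, mul_zero, mul_zero, add_zero] at h4
    have h6 : ‖g‖^2 = 0 := le_antisymm h4 (sq_nonneg _)
    exact norm_eq_zero.mp (pow_eq_zero_iff two_ne_zero |>.mp h6)
  obtain ⟨Tinv, hTi1, hTi2⟩ := SimAux.exists_inv T (2*(2*K + ‖P₀‖)^2) (by positivity) hlow hdense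
  have hTpos : (0 : H →L[ℂ] H) ≤ T := by
    rw [ContinuousLinearMap.nonneg_iff_isPositive]
    refine ⟨ContinuousLinearMap.isSelfAdjoint_iff_isSymmetric.mp hTsa, fun f => ?_⟩
    have h2 : T.reApplyInnerSelf f = (∑' α, ‖P α f‖^2) + ‖P₀ f‖^2 := by
      rw [ContinuousLinearMap.reApplyInnerSelf_apply, hTdiag f]
      exact_mod_cast rfl
    rw [h2]
    exact add_nonneg (tsum_nonneg fun α => sq_nonneg _) (sq_nonneg _)
  obtain ⟨S, S', hSS', hS'S, hsaS, hsaS', hST, hTinvS'⟩ :=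
    SimAux.exists_sqrt T Tinv hTpos hTi1 hTi2
  -- conjugation machinery
  have hSS'm : (S : H →L[ℂ] H) * S' = 1 := hSS'
  have hTi1m : T * Tinv = 1 := hTi1
  have hSTm : S * T = S' := hST
  have hTinvS'm : Tinv * S' = S := hTinvS'
  have conjf : ∀ A B C : H →L[ℂ] H, A * B = C →
      (S' * (A * S)) * (S' * (B * S)) = S' * (C * S) := by
    intro A B C h
    have e1 : (S' * (A * S)) * (S' * (B * S)) = S' * ((A * (S * S')) * (B * S)) := by
      simp only [mul_assoc]
    rw [e1, hSS'm, mul_one, ← h]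
    simp only [mul_assoc]
  have hAdj : ∀ α, ContinuousLinearMap.adjoint (P α) = T * (P α * Tinv) := by
    intro α
    have h : T * P α = ContinuousLinearMap.adjoint (P α) * T := hTP α
    calc ContinuousLinearMap.adjoint (P α)
        = (ContinuousLinearMap.adjoint (P α) * T) * Tinv := by
          rw [mul_assoc, hTi1m, mul_one]
      _ = (T * P α) * Tinv := by rw [← h]
      _ = T * (P α * Tinv) := by rw [mul_assoc]
  have hAdj₀ : ContinuousLinearMap.adjoint P₀ = T * (P₀ * Tinv) := by
    have h : T * P₀ = ContinuousLinearMap.adjoint P₀ * T := hTP₀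
    calc ContinuousLinearMap.adjoint P₀
        = (ContinuousLinearMap.adjoint P₀ * T) * Tinv := by
          rw [mul_assoc, hTi1m, mul_one]
      _ = (T * P₀) * Tinv := by rw [← h]
      _ = T * (P₀ * Tinv) := by rw [mul_assoc]
  have starP' : ∀ A : H →L[ℂ] H, ContinuousLinearMap.adjoint A = T * (A * Tinv) →
      star (S' * (A * S)) = S' * (A * S) := by
    intro A hA
    calc star (S' * (A * S)) = star (A * S) * star S' := star_mul _ _
      _ = (star S * star A) * S' := by rw [star_mul, hsaS'.star_eq]
      _ = (S * (T * (A * Tinv))) * S' := by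
          rw [hsaS.star_eq, ContinuousLinearMap.star_eq_adjoint, hA]
      _ = ((S * T) * A) * (Tinv * S') := by simp only [mul_assoc]
      _ = S' * (A * S) := by rw [hSTm, hTinvS'm]; simp only [mul_assoc]
  refine ⟨S, S', hSS', hS'S, ?_, ?_, ?_, ?_, ?_, ?_, ?_⟩
  · intro α
    constructor
    · show IsSelfAdjoint (S' * (P α * S))
      exact starP' (P α) (hAdj α)
    · show (S' * (P α * S)) * (S' * (P α * S)) = S' * (P α * S)
      exact conjf (P α) (P α) (P α) (Pidem α)
  · constructor
    · show IsSelfAdjoint (S' * (P₀ * S))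
      exact starP' P₀ hAdj₀
    · show (S' * (P₀ * S)) * (S' * (P₀ * S)) = S' * (P₀ * S)
      exact conjf P₀ P₀ P₀ P₀idem
  · intro α β hne
    show (S' * (P α * S)) * (S' * (P β * S)) = 0
    rw [conjf (P α) (P β) 0 (Porth α β hne), zero_mul, mul_zero]
  · intro α
    constructor
    · show (S' * (P α * S)) * (S' * (P₀ * S)) = 0
      rw [conjf (P α) P₀ 0 (PαP₀ α), zero_mul, mul_zero]
    · show (S' * (P₀ * S)) * (S' * (P α * S)) = 0
      rw [conjf P₀ (P α) 0 (P₀Pα α), zero_mul, mul_zero]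
  · -- the norm-convergent decomposition of the identity
    intro f
    show HasSum (fun α => S' (P α (S f))) (f - S' (P₀ (S f)))
    have hadjS' : ContinuousLinearMap.adjoint S' = S' :=
      ContinuousLinearMap.isSelfAdjoint_iff'.mp hsaS'
    have h1 : ∀ (y g : H), ⟪g, S' y⟫_ℂ = ⟪S' g, y⟫_ℂ := by
      intro y g
      rw [← ContinuousLinearMap.adjoint_inner_left, hadjS']
    have hW' : ∀ g : H, HasSum (fun α => ⟪g, S' (P α (S f))⟫_ℂ)
        ⟪g, f - S' (P₀ (S f))⟫_ℂ := by
      intro g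
      have h2 := W (S f) (S' g)
      have h3 : (fun α => ⟪g, S' (P α (S f))⟫_ℂ) = fun α => ⟪S' g, P α (S f)⟫_ℂ := by
        funext α
        rw [h1]
      have h4 : ⟪S' g, S f - P₀ (S f)⟫_ℂ = ⟪g, f - S' (P₀ (S f))⟫_ℂ := by
        rw [← h1 (S f - P₀ (S f)) g]
        congr 1
        rw [map_sub]
        congr 1
        have h5 := congrArg (fun (A : H →L[ℂ] H) => A f) hS'S
        simpa using h5
      rw [h3, ← h4]
      exact h2
    have hadjA : ∀ α, ContinuousLinearMap.adjoint (S' * (P α * S)) = S' * (P α * S) :=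
      fun α => ContinuousLinearMap.isSelfAdjoint_iff'.mp (starP' (P α) (hAdj α))
    have hABf : ∀ α, ⟪(S' * (P α * S)) f, (S' * (P α * S)) f⟫_ℂ
        = ⟪f, (S' * (P α * S)) ((S' * (P α * S)) f)⟫_ℂ := by
      intro α
      have h8 : ⟪ContinuousLinearMap.adjoint (S' * (P α * S)) f, (S' * (P α * S)) f⟫_ℂ
          = ⟪f, (S' * (P α * S)) ((S' * (P α * S)) f)⟫_ℂ :=
        ContinuousLinearMap.adjoint_inner_left _ _ _
      rwa [hadjA α] at h8
    have horth'' : ∀ α β, α ≠ β → ⟪S' (P α (S f)), S' (P β (S f))⟫_ℂ = 0 := by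
      intro α β hne
      have h8 : ⟪ContinuousLinearMap.adjoint (S' * (P α * S)) f, (S' * (P β * S)) f⟫_ℂ
          = ⟪f, (S' * (P α * S)) ((S' * (P β * S)) f)⟫_ℂ :=
        ContinuousLinearMap.adjoint_inner_left _ _ _
      rw [hadjA α] at h8
      have h9 : (S' * (P α * S)) ((S' * (P β * S)) f) = 0 := by
        have h10 := conjf (P α) (P β) 0 (Porth α β hne)
        have h11 := congrArg (fun (A : H →L[ℂ] H) => A f) h10
        simpa using h11
      calc ⟪S' (P α (S f)), S' (P β (S f))⟫_ℂ
          = ⟪(S' * (P α * S)) f, (S' * (P β * S)) f⟫_ℂ := rfl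
        _ = ⟪f, (S' * (P α * S)) ((S' * (P β * S)) f)⟫_ℂ := h8
        _ = 0 := by rw [h9, inner_zero_right]
    have h5 : ∀ α, ⟪f, S' (P α (S f))⟫_ℂ = ((‖S' (P α (S f))‖^2 : ℝ) : ℂ) := by
      intro α
      have h13 : (S' * (P α * S)) ((S' * (P α * S)) f) = (S' * (P α * S)) f := by
        have h14 := congrArg (fun (A : H →L[ℂ] H) => A f) (conjf (P α) (P α) (P α) (Pidem α))
        simpa using h14
      have h8 := hABf α
      rw [h13] at h8
      have h18 : ⟪(S' * (P α * S)) f, (S' * (P α * S)) f⟫_ℂ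
          = ((‖(S' * (P α * S)) f‖^2 : ℝ) : ℂ) := by
        rw [inner_self_eq_norm_sq_to_K]; norm_cast
      calc ⟪f, S' (P α (S f))⟫_ℂ = ⟪f, (S' * (P α * S)) f⟫_ℂ := rfl
        _ = ⟪(S' * (P α * S)) f, (S' * (P α * S)) f⟫_ℂ := h8.symm
        _ = ((‖S' (P α (S f))‖^2 : ℝ) : ℂ) := h18
    have hsq : Summable (fun α => ‖S' (P α (S f))‖^2) := by
      have h16 := ((hW' f).summable.map Complex.reAddGroupHom Complex.continuous_re)
      refine h16.congr (fun α => ?_)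
      show (⟪f, S' (P α (S f))⟫_ℂ).re = _
      rw [h5 α]
      exact Complex.ofReal_re _
    obtain ⟨s, hs⟩ := SimAux.summable_of_orth (fun α => S' (P α (S f))) horth'' hsq
    have hseq : s = f - S' (P₀ (S f)) := by
      apply ext_inner_left ℂ
      intro g
      have h7 := hs.mapL (innerSL ℂ g)
      exact h7.unique (hW' g)
    exact hseq ▸ hs
  · intro u α
    have h1 := conjf (Φ u) (P α) (Φ u * P α) rfl
    have h2 := conjf (P α) (Φ u) (Φ u * P α) (commPhi u α)
    show (S' * (Φ u * S)) * (S' * (P α * S)) = (S' * (P α * S)) * (S' * (Φ u * S))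
    rw [h1, h2]
  · intro u
    have h1 := conjf (Φ u) P₀ (Φ u * P₀) rfl
    have h2 := conjf P₀ (Φ u) (Φ u * P₀) (commPhi₀ u)
    show (S' * (Φ u * S)) * (S' * (P₀ * S)) = (S' * (P₀ * S)) * (S' * (Φ u * S))
    rw [h1, h2]
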